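/- Suppose F: ℝ → ℝ satisfies F(0)=0, F' = f, and c₀¹|u|^{s−1}u + c₁¹ ≤ f(u) ≤ c₀²|u|^{s−1}u + c₂¹ with s > 1, c₀¹ > c₀²/(s+1) > 0. Then there exist constants a₁ > 0 and a₂ ≥ 0 such that for all u ∈ ℝ, (1/2)u f(u) − F(u) ≥ a₁|u|^{s+1} − a₂. -/

import Mathlib

open Real

lemma abs_rpow_hasDerivAt {s : ℝ} (hs : 1 < s) (u : ℝ) :
    HasDerivAt (fun x : ℝ => |x| ^ (s + 1)) ((s + 1) * (|u| ^ (s - 1) * u)) u := by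
  have hq : (1:ℝ) ≤ (s + 1) / 2 := by linarith
  have h2 : HasDerivAt (fun x : ℝ => x ^ 2) (2 * u) u := by
    simpa [mul_comm] using hasDerivAt_pow 2 u
  have h3 : HasDerivAt (fun x : ℝ => (x ^ 2) ^ ((s + 1) / 2))
      ((2 * u) * ((s + 1) / 2) * (u ^ 2) ^ ((s + 1) / 2 - 1)) u :=
    h2.rpow_const (Or.inr hq)
  have key : ∀ x : ℝ, (x ^ 2) ^ ((s + 1) / 2) = |x| ^ (s + 1) := by
    intro x
    rw [← sq_abs, ← Real.rpow_natCast |x| 2, ← Real.rpow_mul (abs_nonneg x)]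
    congr 1
    ring
  have key2 : (u ^ 2) ^ ((s + 1) / 2 - 1) = |u| ^ (s - 1) := by
    rw [← sq_abs, ← Real.rpow_natCast |u| 2, ← Real.rpow_mul (abs_nonneg u)]
    congr 1
    ring
  have goal_eq : (s + 1) * (|u| ^ (s - 1) * u)
      = (2 * u) * ((s + 1) / 2) * (u ^ 2) ^ ((s + 1) / 2 - 1) := by
    rw [key2]; ring
  rw [goal_eq]
  have hfe : (fun x : ℝ => |x| ^ (s + 1))
      = (fun x : ℝ => (x ^ 2) ^ ((s + 1) / 2)) := by
    funext x
    rw [key x]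
  rw [hfe]
  exact h3

lemma abs_rpow_mul_self {s : ℝ} (hs : 1 < s) (u : ℝ) :
    |u| ^ (s - 1) * u * u = |u| ^ (s + 1) := by
  rcases eq_or_ne u 0 with rfl | hu
  · simp [Real.zero_rpow (by linarith : s + 1 ≠ 0)]
  · have h0 : 0 < |u| := abs_pos.mpr hu
    have h2 : |u| ^ (2:ℝ) = u * u := by
      rw [show (2:ℝ) = ((2:ℕ):ℝ) by norm_num, Real.rpow_natCast, sq_abs, sq]
    calc |u| ^ (s - 1) * u * u = |u| ^ (s - 1) * (u * u) := by ring
      _ = |u| ^ (s - 1) * |u| ^ (2:ℝ) := by rw [h2]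
      _ = |u| ^ (s - 1 + 2) := (Real.rpow_add h0 _ _).symm
      _ = |u| ^ (s + 1) := by congr 1; ring

theorem stmt_13 (s c01 c02 c11 c21 : ℝ) (hs : 1 < s)
    (hquot : 0 < c02 / (s + 1)) (hcc : c02 / (s + 1) < c01)
    (f F : ℝ → ℝ) (hF0 : F 0 = 0) (hF : ∀ u : ℝ, HasDerivAt F (f u) u)
    (hlow : ∀ u : ℝ, c01 * |u| ^ (s - 1) * u + c11 ≤ f u)
    (hup : ∀ u : ℝ, f u ≤ c02 * |u| ^ (s - 1) * u + c21) :
    ∃ a₁ a₂ : ℝ, 0 < a₁ ∧ 0 ≤ a₂ ∧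
      ∀ u : ℝ, a₁ * |u| ^ (s + 1) - a₂ ≤ (1 / 2) * u * f u - F u := by
  have hs1 : (0:ℝ) < s + 1 := by linarith
  have hc02 : 0 < c02 := by
    have h := mul_pos hquot hs1
    rwa [div_mul_cancel₀ _ (ne_of_gt hs1)] at h
  -- both bounds together
  have hboth : ∀ u : ℝ, (c01 - c02) * (|u| ^ (s - 1) * u) ≤ c21 - c11 := by
    intro u
    have h1 := hlow u
    have h2 := hup u
    have hr : (c01 - c02) * (|u| ^ (s - 1) * u)
        = c01 * |u| ^ (s - 1) * u - c02 * |u| ^ (s - 1) * u := by ring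
    linarith
  have hkey : ∀ d : ℝ, 0 < d → (∀ T : ℝ, 1 ≤ T → d * T ^ s ≤ c21 - c11) → False := by
    intro d hd hall
    set T : ℝ := max 1 ((c21 - c11 + 1) / d) with hT
    have hT1 : (1:ℝ) ≤ T := le_max_left _ _
    have hT2 : (c21 - c11 + 1) / d ≤ T := le_max_right _ _
    have hTs : T ≤ T ^ s := by
      calc T = T ^ (1:ℝ) := (Real.rpow_one T).symm
        _ ≤ T ^ s := Real.rpow_le_rpow_of_exponent_le hT1 hs.le
    have h3 : c21 - c11 + 1 ≤ d * T := by
      rw [div_le_iff₀ hd] at hT2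
      linarith
    have h4 : d * T ≤ d * T ^ s := mul_le_mul_of_nonneg_left hTs hd.le
    have := hall T hT1
    linarith
  -- c01 = c02
  have heq : c01 = c02 := by
    rcases lt_trichotomy c01 c02 with h | h | h
    · exfalso
      refine hkey (c02 - c01) (by linarith) (fun T hT1 => ?_)
      have hT0 : 0 < T := lt_of_lt_of_le one_pos hT1
      have habs : |(-T)| ^ (s - 1) * (-T) = -(T ^ s) := by
        rw [abs_neg, abs_of_pos hT0]
        have hTT : T ^ (s - 1) * T = T ^ s := by
          calc T ^ (s - 1) * T = T ^ (s - 1) * T ^ (1:ℝ) := by rw [Real.rpow_one]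
            _ = T ^ (s - 1 + 1) := (Real.rpow_add hT0 _ _).symm
            _ = T ^ s := by congr 1; ring
        rw [← hTT]; ring
      have hb := hboth (-T)
      rw [habs] at hb
      linarith
    · exact h
    · exfalso
      refine hkey (c01 - c02) (by linarith) (fun T hT1 => ?_)
      have hT0 : 0 < T := lt_of_lt_of_le one_pos hT1
      have habs : |T| ^ (s - 1) * T = T ^ s := by
        rw [abs_of_pos hT0]
        calc T ^ (s - 1) * T = T ^ (s - 1) * T ^ (1:ℝ) := by rw [Real.rpow_one]
          _ = T ^ (s - 1 + 1) := (Real.rpow_add hT0 _ _).symm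
          _ = T ^ s := by congr 1; ring
      have hb := hboth T
      rw [habs] at hb
      linarith
  rw [heq] at hlow
  -- derivative of the model antiderivative
  have hA : ∀ u : ℝ, HasDerivAt (fun x : ℝ => c02 / (s + 1) * |x| ^ (s + 1))
      (c02 * (|u| ^ (s - 1) * u)) u := by
    intro u
    have h := (abs_rpow_hasDerivAt hs u).const_mul (c02 / (s + 1))
    convert h using 1 <;> try rfl
    field_simp
  have hg2d : ∀ u : ℝ, HasDerivAt (fun x : ℝ => c02 / (s + 1) * |x| ^ (s + 1) + c21 * x - F x)
      (c02 * (|u| ^ (s - 1) * u) + c21 - f u) u := by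
    intro u
    have hid : HasDerivAt (fun x : ℝ => c21 * x) c21 u := by
      simpa using (hasDerivAt_id u).const_mul c21
    exact ((hA u).add hid).sub (hF u)
  have hg2mono : Monotone (fun x : ℝ => c02 / (s + 1) * |x| ^ (s + 1) + c21 * x - F x) := by
    apply monotone_of_deriv_nonneg (fun u => (hg2d u).differentiableAt)
    intro u
    rw [(hg2d u).deriv]
    have h := hup u
    have hr : c02 * (|u| ^ (s - 1) * u) = c02 * |u| ^ (s - 1) * u := by ring
    linarith
  have hg1d : ∀ u : ℝ, HasDerivAt (fun x : ℝ => c02 / (s + 1) * |x| ^ (s + 1) + c11 * x - F x)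
      (c02 * (|u| ^ (s - 1) * u) + c11 - f u) u := by
    intro u
    have hid : HasDerivAt (fun x : ℝ => c11 * x) c11 u := by
      simpa using (hasDerivAt_id u).const_mul c11
    exact ((hA u).add hid).sub (hF u)
  have hg1anti : Antitone (fun x : ℝ => c02 / (s + 1) * |x| ^ (s + 1) + c11 * x - F x) := by
    apply antitone_of_deriv_nonpos (fun u => (hg1d u).differentiableAt)
    intro u
    rw [(hg1d u).deriv]
    have h := hlow u
    have hr : c02 * (|u| ^ (s - 1) * u) = c02 * |u| ^ (s - 1) * u := by ring
    linarith
  have hzero : c02 / (s + 1) * |(0:ℝ)| ^ (s + 1) = 0 := by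
    simp [Real.zero_rpow (by linarith : s + 1 ≠ 0)]
  have hFup : ∀ u : ℝ, 0 ≤ u → F u ≤ c02 / (s + 1) * |u| ^ (s + 1) + c21 * u := by
    intro u hu
    have h := hg2mono hu
    simp only [hzero, hF0] at h
    linarith
  have hFdown : ∀ u : ℝ, u ≤ 0 → F u ≤ c02 / (s + 1) * |u| ^ (s + 1) + c11 * u := by
    intro u hu
    have h := hg1anti hu
    simp only [hzero, hF0] at h
    linarith
  -- constants
  obtain ⟨b, hbdef⟩ : ∃ b : ℝ, b = c02 / 2 - c02 / (s + 1) := ⟨_, rfl⟩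
  have hb : 0 < b := by
    rw [hbdef, div_sub_div _ _ (by norm_num : (2:ℝ) ≠ 0) (ne_of_gt hs1)]
    apply div_pos
    · nlinarith
    · nlinarith
  obtain ⟨K, hKdef⟩ : ∃ K : ℝ, K = |c11| + |c21| := ⟨_, rfl⟩
  have hK : 0 ≤ K := by rw [hKdef]; positivity
  have hG : ∀ u : ℝ, b * |u| ^ (s + 1) - K * |u| ≤ (1 / 2) * u * f u - F u := by
    intro u
    have hX : (0:ℝ) ≤ |u| ^ (s + 1) := Real.rpow_nonneg (abs_nonneg u) _
    have hbXeq : b * |u| ^ (s + 1)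
        = c02 / 2 * |u| ^ (s + 1) - c02 / (s + 1) * |u| ^ (s + 1) := by
      rw [hbdef]; ring
    rcases le_or_gt 0 u with hu | hu
    · have h1 : u * (c02 * |u| ^ (s - 1) * u + c11) ≤ u * f u :=
        mul_le_mul_of_nonneg_left (hlow u) hu
      have h1' : u * (c02 * |u| ^ (s - 1) * u + c11) = c02 * |u| ^ (s + 1) + c11 * u := by
        rw [← abs_rpow_mul_self hs u]; ring
      rw [h1'] at h1
      have h2 := hFup u hu
      have habsu : |u| = u := abs_of_nonneg hu
      have hlin : -(K * |u|) ≤ (c11 / 2 - c21) * u := by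
        rw [habsu]
        have h5 : -K ≤ c11 / 2 - c21 := by
          have e1 := neg_abs_le c11
          have e2 := le_abs_self c21
          have e3 := abs_nonneg c11
          rw [hKdef]; linarith
        have h6 := mul_le_mul_of_nonneg_right h5 hu
        linarith
      linarith
    · have h1 : u * (c02 * |u| ^ (s - 1) * u + c21) ≤ u * f u :=
        mul_le_mul_of_nonpos_left (hup u) hu.le
      have h1' : u * (c02 * |u| ^ (s - 1) * u + c21) = c02 * |u| ^ (s + 1) + c21 * u := by
        rw [← abs_rpow_mul_self hs u]; ring
      rw [h1'] at h1
      have h2 := hFdown u hu.le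
      have habsu : |u| = -u := abs_of_neg hu
      have hlin : -(K * |u|) ≤ (c21 / 2 - c11) * u := by
        rw [habsu]
        have h3 : c21 / 2 - c11 ≤ K := by
          have e1 := le_abs_self c21
          have e2 := neg_abs_le c11
          have e3 := abs_nonneg c21
          rw [hKdef]; linarith
        have h4 := mul_le_mul_of_nonpos_right h3 hu.le
        linarith
      linarith
  -- conclude
  refine ⟨b / 2, K * max 1 (2 * K / b), half_pos hb,
    mul_nonneg hK (le_trans zero_le_one (le_max_left _ _)), fun u => ?_⟩
  have hX : (0:ℝ) ≤ |u| ^ (s + 1) := Real.rpow_nonneg (abs_nonneg u) _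
  have hG' := hG u
  have hR0 : (0:ℝ) ≤ max 1 (2 * K / b) := le_trans zero_le_one (le_max_left _ _)
  rcases le_or_gt |u| (max 1 (2 * K / b)) with h | h
  · have hKu : K * |u| ≤ K * max 1 (2 * K / b) := mul_le_mul_of_nonneg_left h hK
    have hbX0 : 0 ≤ b * |u| ^ (s + 1) := mul_nonneg hb.le hX
    linarith
  · have h1u : (1:ℝ) ≤ |u| := le_trans (le_max_left _ _) h.le
    have hX2 : |u| ^ (2:ℝ) ≤ |u| ^ (s + 1) :=
      Real.rpow_le_rpow_of_exponent_le h1u (by linarith)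
    have h2eq : |u| ^ (2:ℝ) = |u| * |u| := by
      rw [show (2:ℝ) = ((2:ℕ):ℝ) by norm_num, Real.rpow_natCast, sq]
    have hRu : 2 * K / b ≤ |u| := le_trans (le_max_right _ _) h.le
    have hprod : (2 * K / b) * |u| ≤ |u| * |u| :=
      mul_le_mul_of_nonneg_right hRu (abs_nonneg u)
    have hbX : b * ((2 * K / b) * |u|) ≤ b * (|u| ^ (s + 1)) := by
      apply mul_le_mul_of_nonneg_left _ hb.le
      rw [h2eq] at hX2
      linarith
    have heq2 : b * ((2 * K / b) * |u|) = 2 * (K * |u|) := by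
      field_simp
    rw [heq2] at hbX
    have hKR : 0 ≤ K * max 1 (2 * K / b) :=
      mul_nonneg hK hR0
    linarith
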